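/- With p + q = 1 and p > q > 0, for integers a1 < b1 < a3 < b3 < a2 < b2 with k = a3 - b1, l = b3 - a3, m = a2 - b3 all positive, the 3×3 determinant det [[W(a1,b1), W(a1,b2), W(a1,b3)], [W(a2,b1), W(a2,b2), W(a2,b3)], [W(a3,b1), W(a3,b2), W(a3,b3)]] equals (p-q)^{-3} (1 - (q/p)^k)(1 - (q/p)^m). -/
import Mathlib


/-- Walk generating function of the Bernoulli walk on ℤ:
`W(a,b) = (p-q)⁻¹` if `b - a ≥ 0`, and `(p-q)⁻¹ (p/q)^(b-a)` otherwise. -/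
noncomputable def bernoulliWalk (p q : ℝ) (a b : ℤ) : ℝ :=
  if 0 ≤ b - a then (p - q)⁻¹ else (p - q)⁻¹ * (p / q) ^ (b - a)

/-- For `a1 < b1 < a3 < b3 < a2 < b2` with `k = a3 - b1`, `l = b3 - a3`,
`m = a2 - b3` all positive, the 3×3 minor of the Bernoulli walk matrix with
rows `a1, a2, a3` and columns `b1, b2, b3` equals
`(p-q)⁻³ (1 - (q/p)^k)(1 - (q/p)^m)`. -/
theorem stmt5 (p q : ℝ) (hpq : p + q = 1) (hq : 0 < q) (h : q < p)
    (a1 b1 a3 b3 a2 b2 k l m : ℤ)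
    (h1 : a1 < b1) (h2 : b1 < a3) (h3 : a3 < b3) (h4 : b3 < a2) (h5 : a2 < b2)
    (hk : k = a3 - b1) (hl : l = b3 - a3) (hm : m = a2 - b3) :
    Matrix.det
        !![bernoulliWalk p q a1 b1, bernoulliWalk p q a1 b2, bernoulliWalk p q a1 b3;
           bernoulliWalk p q a2 b1, bernoulliWalk p q a2 b2, bernoulliWalk p q a2 b3;
           bernoulliWalk p q a3 b1, bernoulliWalk p q a3 b2, bernoulliWalk p q a3 b3] =
      ((p - q) ^ 3)⁻¹ * (1 - (q / p) ^ k) * (1 - (q / p) ^ m) := by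
  have hp : 0 < p := hq.trans h
  have hqp : (q / p : ℝ) = (p / q)⁻¹ := (inv_div p q).symm
  have hk' : (q / p : ℝ) ^ k = (p / q) ^ (b1 - a3) := by
    rw [hqp, inv_zpow, ← zpow_neg, hk, neg_sub]
  have hm' : (q / p : ℝ) ^ m = (p / q) ^ (b3 - a2) := by
    rw [hqp, inv_zpow, ← zpow_neg, hm, neg_sub]
  have E : ∀ a b : ℤ, a < b → bernoulliWalk p q a b = (p - q)⁻¹ := fun a b hab =>
    if_pos (by omega)
  have E' : ∀ a b : ℤ, b < a → bernoulliWalk p q a b = (p - q)⁻¹ * (p / q) ^ (b - a) :=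
    fun a b hab => if_neg (by omega)
  rw [Matrix.det_fin_three]
  simp only [Matrix.of_apply, Matrix.cons_val', Matrix.cons_val_zero,
    Matrix.cons_val_one, Matrix.head_cons, Matrix.head_fin_const, Matrix.empty_val',
    Matrix.cons_val_fin_one, Matrix.cons_val_two, Matrix.tail_cons]
  rw [E a1 b1 (by omega), E a1 b2 (by omega), E a1 b3 (by omega), E' a2 b1 (by omega),
    E a2 b2 (by omega), E' a2 b3 (by omega), E' a3 b1 (by omega), E a3 b2 (by omega),
    E a3 b3 (by omega)]
  rw [hk', hm', ← inv_pow]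
  ring
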